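/- Let n ≥ 1 and let f : ℝ^n → ℝ be a nonnegative quasi-concave function with f ∈ L¹(ℝ^n). Then ∫_{ℝ^n} Δ_{−∞} f(x) dx ≤ 2^{−n} · C(2n, n) · ∫_{ℝ^n} f(x) dx, where C(2n, n) denotes the binomial coefficient (2n choose n). -/

import Mathlib

open MeasureTheory Set
open scoped ENNReal
open Pointwise intervalIntegral

/-- A nonnegative `f : ℝⁿ → ℝ` is quasi-concave if
`f(t x + (1−t) y) ≥ min(f(x), f(y))` for all `x, y` and `t ∈ [0,1]`. -/
def QuasiConcaveFn {n : ℕ} (f : (Fin n → ℝ) → ℝ) : Prop :=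
  ∀ x y : Fin n → ℝ, ∀ t : ℝ, t ∈ Set.Icc (0 : ℝ) 1 →
    min (f x) (f y) ≤ f (t • x + (1 - t) • y)

/-- The `(−∞)`-difference function of `f`:
`Δ_{−∞} f(z) = sup { min(f(x), f(−y)) : (x+y)/2 = z }`, valued in `[0,∞]`. -/
noncomputable def diffNegInf {n : ℕ} (f : (Fin n → ℝ) → ℝ) (z : Fin n → ℝ) : ℝ≥0∞ :=
  sSup {r : ℝ≥0∞ | ∃ x y : Fin n → ℝ, (1 / 2 : ℝ) • (x + y) = z ∧
    r = ENNReal.ofReal (min (f x) (f (-y)))}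

lemma beta_nat (a b : ℕ) :
    ∫ u in (0:ℝ)..1, u ^ a * (1 - u) ^ b
      = (a.factorial * b.factorial : ℝ) / (a + b + 1).factorial := by
  induction b generalizing a with
  | zero =>
      simp only [pow_zero, mul_one, integral_pow, Nat.factorial_zero, Nat.cast_one,
        one_pow, zero_pow (Nat.succ_ne_zero a)]
      rw [Nat.add_zero, Nat.factorial_succ]
      push_cast
      rw [sub_zero]
      field_simp
  | succ b ih =>
      have key := intervalIntegral.integral_mul_deriv_eq_deriv_mul
        (u := fun x : ℝ => (1 - x) ^ (b + 1))
        (u' := fun x : ℝ => ((b:ℝ) + 1) * (1 - x) ^ b * (-1))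
        (v := fun x : ℝ => x ^ (a + 1) / ((a:ℝ) + 1))
        (v' := fun x : ℝ => x ^ a) (a := (0:ℝ)) (b := 1)
        (fun x _ => by
          have h1 : HasDerivAt (fun x : ℝ => 1 - x) (-1) x :=
            (hasDerivAt_id x).const_sub 1
          have := h1.fun_pow (b + 1)
          simpa [Nat.add_sub_cancel, mul_comm] using this)
        (fun x _ => by
          have := (hasDerivAt_pow (a + 1) x).div_const ((a:ℝ) + 1)
          have ha : ((a:ℝ) + 1) ≠ 0 := by positivity
          simpa [Nat.add_sub_cancel, mul_comm, mul_div_assoc, div_self ha]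
            using this)
        (Continuous.intervalIntegrable (by continuity) _ _)
        (Continuous.intervalIntegrable (by continuity) _ _)
      have comm : ∫ x in (0:ℝ)..1, x ^ a * (1 - x) ^ (b + 1)
          = ∫ x in (0:ℝ)..1, (1 - x) ^ (b + 1) * x ^ a := by
        apply intervalIntegral.integral_congr; intro x _; ring
      rw [comm, key]
      have hrw : ∀ x : ℝ, ((b:ℝ) + 1) * (1 - x) ^ b * (-1) * (x ^ (a + 1) / ((a:ℝ) + 1))
          = (-(((b:ℝ) + 1) / ((a:ℝ) + 1))) * (x ^ (a + 1) * (1 - x) ^ b) := by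
        intro x; field_simp
      rw [intervalIntegral.integral_congr (g := fun x : ℝ =>
            (-(((b:ℝ) + 1) / ((a:ℝ) + 1))) * (x ^ (a + 1) * (1 - x) ^ b))
          (fun x _ => hrw x), intervalIntegral.integral_const_mul, ih (a + 1)]
      have ha : ((a:ℝ) + 1) ≠ 0 := by positivity
      have h2 : ((a + 1 + b + 1).factorial : ℝ) ≠ 0 := by positivity
      simp only [one_pow, sub_self, zero_pow (Nat.succ_ne_zero b), Nat.factorial_succ]
      have e1 : a + 1 + b + 1 = a + (b + 1) + 1 := by omega
      rw [e1] at *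
      push_cast
      field_simp
      ring

lemma psi_integral {n : ℕ} (hn : 1 ≤ n) {v : ℝ} (hv : 0 < v) :
    ∫ t in Ioc (0:ℝ) v, (1 - (t / v) ^ ((n:ℝ))⁻¹) ^ n
      = v / (Nat.choose (2 * n) n : ℝ) := by
  have hn0 : (n:ℝ) ≠ 0 := Nat.cast_ne_zero.2 (by omega)
  have hgc : Continuous fun t : ℝ => (1 - (t / v) ^ ((n:ℝ))⁻¹) ^ n := by
    apply Continuous.pow
    apply Continuous.sub continuous_const
    have hc : Continuous fun w : ℝ => w ^ ((n:ℝ))⁻¹ := by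
      rw [continuous_iff_continuousAt]
      intro x
      exact Real.continuousAt_rpow_const x _ (Or.inr (by positivity))
    exact hc.comp (continuous_id.div_const v)
  have h1 : ∫ t in Ioc (0:ℝ) v, (1 - (t / v) ^ ((n:ℝ))⁻¹) ^ n
      = ∫ t in (0:ℝ)..v, (1 - (t / v) ^ ((n:ℝ))⁻¹) ^ n := by
    rw [intervalIntegral.integral_of_le hv.le]
  have hsub := intervalIntegral.integral_comp_smul_deriv
    (f := fun u : ℝ => v * u ^ n)
    (f' := fun u : ℝ => v * ((n:ℝ) * u ^ (n - 1)))
    (g := fun t : ℝ => (1 - (t / v) ^ ((n:ℝ))⁻¹) ^ n)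
    (a := (0:ℝ)) (b := 1)
    (fun u _ => (hasDerivAt_pow n u).const_mul v)
    (by fun_prop) hgc
  simp only [mul_zero, mul_one, one_pow, zero_pow (by omega : n ≠ 0)] at hsub
  rw [h1, ← hsub]
  have hcong : ∀ u ∈ uIcc (0:ℝ) 1,
      (v * ((n:ℝ) * u ^ (n - 1))) • ((fun t : ℝ => (1 - (t / v) ^ ((n:ℝ))⁻¹) ^ n) ∘
        fun u : ℝ => v * u ^ n) u
        = (v * (n:ℝ)) * (u ^ (n - 1) * (1 - u) ^ n) := by
    intro u hu
    rw [Set.uIcc_of_le (by norm_num : (0:ℝ) ≤ 1)] at hu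
    have hu0 : 0 ≤ u := hu.1
    have : (v * u ^ n / v) ^ ((n:ℝ))⁻¹ = u := by
      rw [mul_div_cancel_left₀ _ hv.ne', ← Real.rpow_natCast u n, ← Real.rpow_mul hu0,
        mul_inv_cancel₀ hn0, Real.rpow_one]
    simp only [Function.comp, this, smul_eq_mul]
    ring
  rw [intervalIntegral.integral_congr hcong, intervalIntegral.integral_const_mul,
    beta_nat (n - 1) n]
  have e1 : n - 1 + n + 1 = 2 * n := by omega
  rw [e1]
  have key : (Nat.choose (2 * n) n : ℝ) * (n.factorial * n.factorial) = (2 * n).factorial := by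
    have := Nat.choose_mul_factorial_mul_factorial (show n ≤ 2 * n by omega)
    rw [show 2 * n - n = n by omega] at this
    push_cast [← this]
    ring
  have hfac : ((n:ℝ)) * (n - 1).factorial = n.factorial := by
    rw [← Nat.cast_mul, Nat.mul_factorial_pred (by omega)]
  have hch : (Nat.choose (2 * n) n : ℝ) ≠ 0 :=
    Nat.cast_ne_zero.2 (Nat.choose_pos (by omega)).ne'
  have h2n : ((2 * n).factorial : ℝ) ≠ 0 := by positivity
  field_simp
  linear_combination (n.factorial : ℝ) * (Nat.choose (2 * n) n : ℝ) * hfac + key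

theorem rogers_shephard {n : ℕ} (hn : 1 ≤ n) {K : Set (Fin n → ℝ)} (hK : Convex ℝ K) :
    volume (K - K) ≤ (Nat.choose (2 * n) n : ℝ≥0∞) * volume K := by
  have hCpos : 0 < Nat.choose (2 * n) n := Nat.choose_pos (by omega)
  have hC0 : (Nat.choose (2 * n) n : ℝ≥0∞) ≠ 0 := by exact_mod_cast hCpos.ne'
  rcases Set.eq_empty_or_nonempty K with rfl | ⟨a0, ha0⟩
  · simp
  by_cases hV0 : volume K = 0
  · -- degenerate case : K has empty interior, so K - K lies in a proper submodule
    have hint : interior K = ∅ := by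
      by_contra h
      obtain ⟨x, hx⟩ := Set.nonempty_iff_ne_empty.2 h
      obtain ⟨ε, hε, hball⟩ := Metric.mem_nhds_iff.1 (mem_interior_iff_mem_nhds.1 hx)
      have h1 : volume (Metric.ball x ε) ≤ volume K := measure_mono hball
      rw [hV0] at h1
      exact absurd (le_antisymm h1 zero_le) (Metric.measure_ball_pos volume x hε).ne'
    have hspan : affineSpan ℝ K ≠ ⊤ := by
      intro h
      rw [← hK.interior_nonempty_iff_affineSpan_eq_top] at h
      rw [hint] at h
      exact Set.not_nonempty_empty h
    have hdir : (affineSpan ℝ K).direction ≠ ⊤ := by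
      intro h
      apply hspan
      rw [eq_top_iff]
      intro p _
      have hmem : a0 ∈ affineSpan ℝ K := subset_affineSpan ℝ K ha0
      have : p - a0 ∈ (affineSpan ℝ K).direction := h ▸ Submodule.mem_top
      have := AffineSubspace.vadd_mem_of_mem_direction this hmem
      simpa [vadd_eq_add, sub_add_cancel] using this
    have hsub : K - K ⊆ ((affineSpan ℝ K).direction : Set (Fin n → ℝ)) := by
      rintro z ⟨a, ha, b, hb, rfl⟩
      have := AffineSubspace.vsub_mem_direction (subset_affineSpan ℝ K ha)
        (subset_affineSpan ℝ K hb)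
      simpa [vsub_eq_sub] using this
    rw [measure_mono_null hsub (Measure.addHaar_submodule volume _ hdir)]
    exact zero_le
  by_cases hVtop : volume K = ⊤
  · rw [hVtop, ENNReal.mul_top hC0]
    exact le_top
  -- main case
  set v : ℝ := (volume K).toReal with hvdef
  have hv : 0 < v := ENNReal.toReal_pos hV0 hVtop
  have hVofReal : ENNReal.ofReal v = volume K := ENNReal.ofReal_toReal hVtop
  have hKnm : NullMeasurableSet K volume := hK.nullMeasurableSet volume
  set M := toMeasurable volume K with hMdef
  have hM : MeasurableSet M := measurableSet_toMeasurable _ _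
  have hMK : M =ᵐ[volume] K := hKnm.toMeasurable_ae_eq
  have hMvol : volume M = volume K := measure_toMeasurable K
  set G : (Fin n → ℝ) → ℝ≥0∞ :=
    fun x => ∫⁻ y, M.indicator 1 y * M.indicator 1 (y - x) with hGdef
  have hFmeas : Measurable fun p : (Fin n → ℝ) × (Fin n → ℝ) =>
      M.indicator (1 : (Fin n → ℝ) → ℝ≥0∞) p.2 * M.indicator 1 (p.2 - p.1) :=
    ((measurable_one.indicator hM).comp measurable_snd).mul
      ((measurable_one.indicator hM).comp (measurable_snd.sub measurable_fst))
  have hGmeas : Measurable G := hFmeas.lintegral_prod_right'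
  have hind_ne_top : ∀ (y : Fin n → ℝ), M.indicator (1 : (Fin n → ℝ) → ℝ≥0∞) y ≠ ⊤ := by
    intro y; by_cases h : y ∈ M <;> simp [Set.indicator_apply, h]
  -- Fubini : total integral of G
  have hGint : ∫⁻ x, G x = volume K * volume K := by
    rw [hGdef]
    rw [lintegral_lintegral_swap hFmeas.aemeasurable]
    have inner : ∀ y : Fin n → ℝ,
        (∫⁻ x, M.indicator (1 : (Fin n → ℝ) → ℝ≥0∞) y * M.indicator 1 (y - x))
          = M.indicator 1 y * volume K := by
      intro y
      rw [lintegral_const_mul' _ _ (hind_ne_top y)]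
      congr 1
      have hmp := (Measure.measurePreserving_sub_left (volume : Measure (Fin n → ℝ)) y)
      rw [hmp.lintegral_comp (measurable_one.indicator hM)]
      rw [lintegral_indicator_one hM, hMvol]
    simp_rw [inner]
    rw [lintegral_mul_const' _ _ hVtop, lintegral_indicator_one hM, hMvol]
  -- pointwise value of G
  have hGval : ∀ x, G x = volume (K ∩ (fun y => y - x) ⁻¹' K) := by
    intro x
    have hpremeas : ∀ A : Set (Fin n → ℝ), volume ((fun y => y - x) ⁻¹' A) = volume A := by
      intro A
      have he : (fun y : Fin n → ℝ => y - x) = (fun y => -x + y) := by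
        funext y; rw [sub_eq_neg_add]
      rw [he]
      exact measure_preimage_add volume (-x) A
    have hptw : ∀ y : Fin n → ℝ,
        M.indicator (1 : (Fin n → ℝ) → ℝ≥0∞) y * M.indicator 1 (y - x)
          = (M ∩ (fun y => y - x) ⁻¹' M).indicator 1 y := by
      intro y
      by_cases h1 : y ∈ M <;> by_cases h2 : y - x ∈ M <;>
        simp [Set.indicator_apply, h1, h2, Set.mem_preimage]
    have hmeas2 : MeasurableSet (M ∩ (fun y => y - x) ⁻¹' M) :=
      hM.inter (hM.preimage (measurable_id.sub measurable_const))
    rw [hGdef]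
    simp only []
    rw [show (∫⁻ y, M.indicator (1 : (Fin n → ℝ) → ℝ≥0∞) y * M.indicator 1 (y - x))
        = ∫⁻ y, (M ∩ (fun y => y - x) ⁻¹' M).indicator 1 y from
      lintegral_congr fun y => hptw y]
    rw [lintegral_indicator_one hmeas2]
    apply measure_congr
    apply ae_eq_set_inter hMK
    rw [ae_eq_set] at hMK ⊢
    constructor
    · rw [← Set.preimage_diff, hpremeas]; exact hMK.1
    · rw [← Set.preimage_diff, hpremeas]; exact hMK.2
  -- lower bound for G on dilates of K - K
  have hlow : ∀ l : ℝ, 0 ≤ l → l ≤ 1 → ∀ x ∈ l • (K - K),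
      ENNReal.ofReal ((1 - l) ^ n) * volume K ≤ G x := by
    intro l hl0 hl1 x hx
    obtain ⟨u, hu, rfl⟩ := hx
    obtain ⟨a, ha, b, hb, rfl⟩ := hu
    have hsubset : (l • a) +ᵥ ((1 - l) • K) ⊆ K ∩ (fun y => y - l • (a - b)) ⁻¹' K := by
      rintro z hz
      obtain ⟨w, ⟨k, hk, rfl⟩, rfl⟩ := hz
      constructor
      · have h := hK hk ha (a := 1 - l) (b := l) (by linarith) hl0 (by ring)
        show l • a +ᵥ ((1 - l) • k) ∈ K
        rw [vadd_eq_add, add_comm]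
        exact h
      · have hmem := hK hk hb (a := 1 - l) (b := l) (by linarith) hl0 (by ring)
        simp only [Set.mem_preimage, vadd_eq_add]
        have heq : l • a + (1 - l) • k - l • (a - b) = (1 - l) • k + l • b := by
          rw [smul_sub]; abel
        rw [heq]
        exact hmem
    have hvolS : volume ((l • a) +ᵥ ((1 - l) • K))
        = ENNReal.ofReal ((1 - l) ^ n) * volume K := by
      rw [measure_vadd, Measure.addHaar_smul_of_nonneg volume (by linarith) K,
        Module.finrank_fin_fun]
    rw [hGval]
    calc ENNReal.ofReal ((1 - l) ^ n) * volume K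
        = volume ((l • a) +ᵥ ((1 - l) • K)) := hvolS.symm
      _ ≤ volume (K ∩ (fun y => y - l • (a - b)) ⁻¹' K) := measure_mono hsubset
  -- the truncated real-valued version of G
  set Gt : (Fin n → ℝ) → ℝ := fun x => (min (G x) (volume K)).toReal with hGtdef
  have hmin_ne_top : ∀ x, min (G x) (volume K) ≠ ⊤ :=
    fun x => ne_top_of_le_ne_top hVtop (min_le_right _ _)
  have hGt_meas : AEMeasurable Gt volume :=
    ((hGmeas.min measurable_const).ennreal_toReal).aemeasurable
  have layer : (∫⁻ x, ENNReal.ofReal (Gt x)) = ∫⁻ t in Ioi (0:ℝ), volume {a | t ≤ Gt a} :=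
    lintegral_eq_lintegral_meas_le volume
      (Filter.Eventually.of_forall fun x => ENNReal.toReal_nonneg) hGt_meas
  have hup : (∫⁻ x, ENNReal.ofReal (Gt x)) ≤ volume K * volume K := by
    rw [← hGint]
    apply lintegral_mono
    intro x
    rw [hGtdef]
    simp only []
    rw [ENNReal.ofReal_toReal (hmin_ne_top x)]
    exact min_le_left _ _
  -- pointwise lower bound on sublevel measures
  have hpt : ∀ t ∈ Ioc (0:ℝ) v,
      ENNReal.ofReal ((1 - (t / v) ^ ((n:ℝ))⁻¹) ^ n) * volume (K - K)
        ≤ volume {a | t ≤ Gt a} := by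
    rintro t ⟨ht0, htv⟩
    set l : ℝ := 1 - (t / v) ^ ((n:ℝ))⁻¹ with hldef
    have htv0 : 0 ≤ t / v := by positivity
    have htv1 : t / v ≤ 1 := (div_le_one hv).2 htv
    have hrpow0 : 0 ≤ (t / v) ^ ((n:ℝ))⁻¹ := Real.rpow_nonneg htv0 _
    have hrpow1 : (t / v) ^ ((n:ℝ))⁻¹ ≤ 1 := Real.rpow_le_one htv0 htv1 (by positivity)
    have hl0 : 0 ≤ l := by rw [hldef]; linarith
    have hl1 : l ≤ 1 := by rw [hldef]; linarith
    have hone_sub : (1 - l) ^ n = t / v := by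
      rw [hldef]
      have : (1:ℝ) - (1 - (t / v) ^ ((n:ℝ))⁻¹) = (t / v) ^ ((n:ℝ))⁻¹ := by ring
      rw [this, ← Real.rpow_natCast ((t / v) ^ ((n:ℝ))⁻¹) n, ← Real.rpow_mul htv0,
        inv_mul_cancel₀ (by exact_mod_cast (by omega : n ≠ 0) : (n:ℝ) ≠ 0), Real.rpow_one]
    have hfeq : ENNReal.ofReal ((1 - l) ^ n) * volume K = ENNReal.ofReal t := by
      rw [hone_sub, ← hVofReal, ← ENNReal.ofReal_mul (by positivity),
        div_mul_cancel₀ _ hv.ne']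
    have hsub2 : l • (K - K) ⊆ {a | t ≤ Gt a} := by
      intro x hx
      have h1 := hlow l hl0 hl1 x hx
      rw [hfeq] at h1
      show t ≤ Gt x
      have h2 : ENNReal.ofReal t ≤ min (G x) (volume K) :=
        le_min h1 (by rw [← hVofReal]; exact ENNReal.ofReal_le_ofReal htv)
      have h3 := ENNReal.toReal_mono (hmin_ne_top x) h2
      rwa [ENNReal.toReal_ofReal ht0.le] at h3
    calc ENNReal.ofReal (l ^ n) * volume (K - K) = volume (l • (K - K)) := by
          rw [Measure.addHaar_smul_of_nonneg volume hl0, Module.finrank_fin_fun]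
      _ ≤ volume {a | t ≤ Gt a} := measure_mono hsub2
  -- integrate the lower bound
  have hψcont : Continuous fun t : ℝ => (1 - (t / v) ^ ((n:ℝ))⁻¹) ^ n := by
    apply Continuous.pow
    apply Continuous.sub continuous_const
    have hc : Continuous fun w : ℝ => w ^ ((n:ℝ))⁻¹ := by
      rw [continuous_iff_continuousAt]
      intro x
      exact Real.continuousAt_rpow_const x _ (Or.inr (by positivity))
    exact hc.comp (continuous_id.div_const v)
  have hmain : ENNReal.ofReal (v / (Nat.choose (2 * n) n : ℝ)) * volume (K - K)
      ≤ volume K * volume K := by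
    calc ENNReal.ofReal (v / (Nat.choose (2 * n) n : ℝ)) * volume (K - K)
        = (∫⁻ t in Ioc (0:ℝ) v, ENNReal.ofReal ((1 - (t / v) ^ ((n:ℝ))⁻¹) ^ n))
            * volume (K - K) := by
          congr 1
          rw [← psi_integral hn hv]
          rw [← ofReal_integral_eq_lintegral_ofReal
            (hψcont.integrableOn_Ioc)
            ((ae_restrict_iff' measurableSet_Ioc).2 (Filter.Eventually.of_forall ?_))]
          rintro t ⟨ht0, htv⟩
          have htv0 : 0 ≤ t / v := by positivity
          have h1 : (t / v) ^ ((n:ℝ))⁻¹ ≤ 1 :=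
            Real.rpow_le_one htv0 ((div_le_one hv).2 htv) (by positivity)
          exact pow_nonneg (by linarith) n
      _ = ∫⁻ t in Ioc (0:ℝ) v,
            ENNReal.ofReal ((1 - (t / v) ^ ((n:ℝ))⁻¹) ^ n) * volume (K - K) :=
          (lintegral_mul_const _ (hψcont.measurable.ennreal_ofReal)).symm
      _ ≤ ∫⁻ t in Ioc (0:ℝ) v, volume {a | t ≤ Gt a} :=
          lintegral_mono_ae ((ae_restrict_iff' measurableSet_Ioc).2
            (Filter.Eventually.of_forall hpt))
      _ ≤ ∫⁻ t in Ioi (0:ℝ), volume {a | t ≤ Gt a} :=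
          lintegral_mono' (Measure.restrict_mono Ioc_subset_Ioi_self le_rfl) le_rfl
      _ = ∫⁻ x, ENNReal.ofReal (Gt x) := layer.symm
      _ ≤ volume K * volume K := hup
  -- conclude
  have hCr : (0:ℝ) < (Nat.choose (2 * n) n : ℝ) := by exact_mod_cast hCpos
  have hd0 : ENNReal.ofReal (v / (Nat.choose (2 * n) n : ℝ)) ≠ 0 := by
    rw [← ENNReal.ofReal_zero, Ne, ENNReal.ofReal_eq_ofReal_iff (by positivity) le_rfl]
    positivity
  have hdtop : ENNReal.ofReal (v / (Nat.choose (2 * n) n : ℝ)) ≠ ⊤ := ENNReal.ofReal_ne_top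
  have hdiv : volume (K - K)
      ≤ volume K * volume K / ENNReal.ofReal (v / (Nat.choose (2 * n) n : ℝ)) := by
    rw [ENNReal.le_div_iff_mul_le (Or.inl hd0) (Or.inl hdtop), mul_comm]
    exact hmain
  refine hdiv.trans (le_of_eq ?_)
  have hCtop : (Nat.choose (2 * n) n : ℝ≥0∞) ≠ ⊤ := ENNReal.natCast_ne_top _
  have hd : ENNReal.ofReal (v / (Nat.choose (2 * n) n : ℝ))
      = volume K / (Nat.choose (2 * n) n : ℝ≥0∞) := by
    rw [ENNReal.ofReal_div_of_pos hCr, hVofReal, ENNReal.ofReal_natCast]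
  rw [hd]
  rw [eq_comm, ENNReal.eq_div_iff (by simp [ENNReal.div_eq_zero_iff, hV0, hCtop])
    (by simp [ENNReal.div_eq_top, hVtop, hC0])]
  rw [← mul_assoc, ENNReal.div_mul_cancel hC0 hCtop]

lemma lt_diffNegInf {n : ℕ} {f : (Fin n → ℝ) → ℝ} {z : Fin n → ℝ} {c : ℝ≥0∞}
    (h : c < diffNegInf f z) :
    ∃ x y : Fin n → ℝ, (1 / 2 : ℝ) • (x + y) = z ∧
      c < ENNReal.ofReal (min (f x) (f (-y))) := by
  obtain ⟨r, hr, hcr⟩ := lt_sSup_iff.1 h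
  obtain ⟨x, y, hxy, rfl⟩ := hr
  exact ⟨x, y, hxy, hcr⟩

/-- For a nonnegative quasi-concave `f ∈ L¹(ℝⁿ)`,
`∫ Δ_{−∞} f ≤ 2^{−n} (2n choose n) ∫ f`. -/
theorem lintegral_diffNegInf_le {n : ℕ} (hn : 1 ≤ n) (f : (Fin n → ℝ) → ℝ)
    (hf0 : ∀ x, 0 ≤ f x) (hf : QuasiConcaveFn f) (hint : Integrable f) :
    ∫⁻ z, diffNegInf f z ≤
      (2 ^ n : ℝ≥0∞)⁻¹ * (Nat.choose (2 * n) n : ℝ≥0∞) *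
        ∫⁻ x, ENNReal.ofReal (f x) := by
  classical
  have hmem : ∀ z x y : Fin n → ℝ, (1/2 : ℝ) • (x + y) = z →
      ENNReal.ofReal (min (f x) (f (-y))) ≤ diffNegInf f z := fun z x y h =>
    le_sSup ⟨x, y, h, rfl⟩
  -- superlevel sets of the difference function are convex
  have hconv : ∀ c : ℝ≥0∞, Convex ℝ {z | c < diffNegInf f z} := by
    intro c z1 hz1 z2 hz2 p q hp hq hpq
    obtain ⟨x1, y1, hxy1, hr1⟩ := lt_diffNegInf hz1
    obtain ⟨x2, y2, hxy2, hr2⟩ := lt_diffNegInf hz2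
    show c < diffNegInf f (p • z1 + q • z2)
    have hq' : q = 1 - p := by linarith
    have harg : (1/2 : ℝ) • ((p • x1 + q • x2) + (p • y1 + q • y2)) = p • z1 + q • z2 := by
      rw [← hxy1, ← hxy2]; module
    have hx : min (f x1) (f x2) ≤ f (p • x1 + q • x2) := by
      have h := hf x1 x2 p ⟨hp, by linarith⟩
      rwa [← hq'] at h
    have hy : min (f (-y1)) (f (-y2)) ≤ f (-(p • y1 + q • y2)) := by
      have h := hf (-y1) (-y2) p ⟨hp, by linarith⟩
      rw [← hq'] at h
      have harg2 : p • (-y1) + q • (-y2) = -(p • y1 + q • y2) := by module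
      rwa [harg2] at h
    have hminle : min (min (f x1) (f (-y1))) (min (f x2) (f (-y2)))
        ≤ min (f (p • x1 + q • x2)) (f (-(p • y1 + q • y2))) := by
      apply le_min
      · exact le_trans (le_min ((min_le_left _ _).trans (min_le_left _ _))
          ((min_le_right _ _).trans (min_le_left _ _))) hx
      · exact le_trans (le_min ((min_le_left _ _).trans (min_le_right _ _))
          ((min_le_right _ _).trans (min_le_right _ _))) hy
    have hc : c < ENNReal.ofReal (min (min (f x1) (f (-y1))) (min (f x2) (f (-y2)))) := by
      rcases le_total (min (f x1) (f (-y1))) (min (f x2) (f (-y2))) with h | h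
      · rwa [min_eq_left h]
      · rwa [min_eq_right h]
    calc c < _ := hc
      _ ≤ ENNReal.ofReal (min (f (p • x1 + q • x2)) (f (-(p • y1 + q • y2)))) :=
          ENNReal.ofReal_le_ofReal hminle
      _ ≤ diffNegInf f (p • z1 + q • z2) := hmem _ _ _ harg
  -- a.e. measurability
  have hΔmeas : AEMeasurable (diffNegInf f) volume := by
    have hnm : NullMeasurable (diffNegInf f) volume := by
      have h : @Measurable (MeasureTheory.NullMeasurableSpace (Fin n → ℝ) volume) ℝ≥0∞
          MeasureTheory.NullMeasurableSpace.instMeasurableSpace _ (diffNegInf f) := by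
        apply measurable_of_Ioi
        intro c
        exact ((hconv c).nullMeasurableSet volume)
      exact h
    exact hnm.aemeasurable
  -- measure bound on superlevel sets via Rogers-Shephard
  have hbound : ∀ t : ℝ, 0 < t →
      volume {z | ENNReal.ofReal t < diffNegInf f z}
        ≤ (2 ^ n : ℝ≥0∞)⁻¹ * (Nat.choose (2 * n) n : ℝ≥0∞) * volume {x | t < f x} := by
    intro t ht
    set S := {x : Fin n → ℝ | t < f x} with hSdef
    have hSconv : Convex ℝ S := by
      intro x1 hx1 x2 hx2 p q hp hq hpq
      show t < f (p • x1 + q • x2)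
      have h := hf x1 x2 p ⟨hp, by linarith⟩
      rw [show (1:ℝ) - p = q by linarith] at h
      calc t < min (f x1) (f x2) := lt_min hx1 hx2
        _ ≤ _ := h
    have hincl : {z | ENNReal.ofReal t < diffNegInf f z} ⊆ (1/2 : ℝ) • (S - S) := by
      intro z hz
      obtain ⟨x, y, hxy, hr⟩ := lt_diffNegInf hz
      have hlt : t < min (f x) (f (-y)) :=
        (ENNReal.ofReal_lt_ofReal_iff_of_nonneg ht.le).1 hr
      refine ⟨x - -y, ⟨x, lt_of_lt_of_le hlt (min_le_left _ _), -y,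
        lt_of_lt_of_le hlt (min_le_right _ _), rfl⟩, ?_⟩
      show (1/2 : ℝ) • (x - -y) = z
      rw [sub_neg_eq_add]
      exact hxy
    have hhalf : ENNReal.ofReal ((1/2 : ℝ) ^ n) = (2 ^ n : ℝ≥0∞)⁻¹ := by
      rw [ENNReal.ofReal_pow (by norm_num), ENNReal.inv_pow]
      congr 1
      rw [one_div, ENNReal.ofReal_inv_of_pos (by norm_num)]
      norm_num
    calc volume {z | ENNReal.ofReal t < diffNegInf f z}
        ≤ volume ((1/2 : ℝ) • (S - S)) := measure_mono hincl
      _ = ENNReal.ofReal ((1/2 : ℝ) ^ n) * volume (S - S) := by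
          rw [Measure.addHaar_smul_of_nonneg volume (by norm_num), Module.finrank_fin_fun]
      _ ≤ ENNReal.ofReal ((1/2 : ℝ) ^ n) * ((Nat.choose (2 * n) n : ℝ≥0∞) * volume S) :=
          mul_le_mul_right (rogers_shephard hn hSconv) _
      _ = (2 ^ n : ℝ≥0∞)⁻¹ * (Nat.choose (2 * n) n : ℝ≥0∞) * volume S := by
          rw [hhalf, mul_assoc]
  -- truncation
  have hsup : ∀ z, diffNegInf f z = ⨆ k : ℕ, min (diffNegInf f z) k := by
    intro z
    apply le_antisymm
    · rcases eq_or_ne (diffNegInf f z) ⊤ with h | h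
      · rw [h]
        have : ∀ k : ℕ, min (⊤ : ℝ≥0∞) (k : ℝ≥0∞) = (k : ℝ≥0∞) :=
          fun k => min_eq_right le_top
        simp_rw [this, ENNReal.iSup_natCast]
        exact le_rfl
      · obtain ⟨k, hk⟩ := exists_nat_ge (diffNegInf f z).toReal
        refine le_iSup_of_le k (le_of_eq ?_)
        rw [min_eq_left]
        rw [← ENNReal.ofReal_toReal h, ← ENNReal.ofReal_natCast]
        exact ENNReal.ofReal_le_ofReal hk
    · exact iSup_le fun k => min_le_left _ _
  have hMCT : ∫⁻ z, diffNegInf f z = ⨆ k : ℕ, ∫⁻ z, min (diffNegInf f z) k := by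
    rw [lintegral_congr hsup]
    exact lintegral_iSup' (fun k => hΔmeas.min aemeasurable_const)
      (Filter.Eventually.of_forall fun z k1 k2 h =>
        min_le_min le_rfl (Nat.cast_le.2 h))
  have hconst_ne_top : (2 ^ n : ℝ≥0∞)⁻¹ * (Nat.choose (2 * n) n : ℝ≥0∞) ≠ ⊤ :=
    ENNReal.mul_ne_top (ENNReal.inv_ne_top.2 (by positivity)) (ENNReal.natCast_ne_top _)
  have hk_bound : ∀ k : ℕ, ∫⁻ z, min (diffNegInf f z) k ≤
      (2 ^ n : ℝ≥0∞)⁻¹ * (Nat.choose (2 * n) n : ℝ≥0∞) * ∫⁻ x, ENNReal.ofReal (f x) := by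
    intro k
    set Fk : (Fin n → ℝ) → ℝ := fun z => (min (diffNegInf f z) k).toReal with hFkdef
    have hFk_meas : AEMeasurable Fk volume := (hΔmeas.min aemeasurable_const).ennreal_toReal
    have hFk_eq : ∀ z, ENNReal.ofReal (Fk z) = min (diffNegInf f z) k := fun z =>
      ENNReal.ofReal_toReal (ne_top_of_le_ne_top (ENNReal.natCast_ne_top k) (min_le_right _ _))
    calc ∫⁻ z, min (diffNegInf f z) k
        = ∫⁻ z, ENNReal.ofReal (Fk z) := lintegral_congr fun z => (hFk_eq z).symm
      _ = ∫⁻ t in Ioi (0:ℝ), volume {z | t < Fk z} :=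
          lintegral_eq_lintegral_meas_lt volume
            (Filter.Eventually.of_forall fun z => ENNReal.toReal_nonneg) hFk_meas
      _ ≤ ∫⁻ t in Ioi (0:ℝ), (2 ^ n : ℝ≥0∞)⁻¹ * (Nat.choose (2 * n) n : ℝ≥0∞)
            * volume {x | t < f x} := by
          apply lintegral_mono_ae
          rw [ae_restrict_iff' measurableSet_Ioi]
          apply Filter.Eventually.of_forall
          intro t ht
          have ht0 : (0:ℝ) < t := ht
          have hsubk : {z | t < Fk z} ⊆ {z | ENNReal.ofReal t < diffNegInf f z} := by
            intro z hz
            have h1 : ENNReal.ofReal t < min (diffNegInf f z) k := by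
              rw [← hFk_eq z]
              exact (ENNReal.ofReal_lt_ofReal_iff_of_nonneg ht0.le).2 hz
            exact lt_of_lt_of_le h1 (min_le_left _ _)
          exact (measure_mono hsubk).trans (hbound t ht0)
      _ = (2 ^ n : ℝ≥0∞)⁻¹ * (Nat.choose (2 * n) n : ℝ≥0∞)
            * ∫⁻ t in Ioi (0:ℝ), volume {x | t < f x} :=
          lintegral_const_mul' _ _ hconst_ne_top
      _ = (2 ^ n : ℝ≥0∞)⁻¹ * (Nat.choose (2 * n) n : ℝ≥0∞)
            * ∫⁻ x, ENNReal.ofReal (f x) := by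
          rw [← lintegral_eq_lintegral_meas_lt volume
            (Filter.Eventually.of_forall hf0) hint.aemeasurable]
  rw [hMCT]
  exact iSup_le hk_bound
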